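/- Sign property of p-th order ENO reconstruction: Given cell averages (v̄_i) over a strictly increasing partition (x_{i+1/2}) of ℝ, let v⁻_{i+1/2} and v⁺_{i+1/2} be the left and right reconstructed point values at interface x_{i+1/2} obtained from the p-th order ENO reconstruction algorithm (differentiating the ENO interpolant of the primitive). Then for every interface: if v̄_{i+1} − v̄_i ≥ 0 then v⁺_{i+1/2} − v⁻_{i+1/2} ≥ 0, and if v̄_{i+1} − v̄_i ≤ 0 then v⁺_{i+1/2} − v⁻_{i+1/2} ≤ 0. In particular, v̄_{i+1} = v̄_i implies v⁺_{i+1/2} = v⁻_{i+1/2}. -/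

import Mathlib

/-- Divided differences of the data `V` at the points `x`:
`dd x V j i = V[x_i, ..., x_{i+j}]`. -/
noncomputable def dd (x V : ℤ → ℝ) : ℕ → ℤ → ℝ
  | 0, i => V i
  | j + 1, i => (dd x V j (i + 1) - dd x V j i) / (x (i + (j : ℤ) + 1) - x i)

/-- ENO reconstruction stencil offsets for cell `i` (interfaces `x_i`, `x_{i+1}`):
`enoOffsetR x V i j` is the left offset `r_j` of the `j+1`-point stencil
`{x_{i+r_j}, ..., x_{i+r_j+j}}` chosen by the ENO selection procedure applied to
the data `V` (the primitive) at the points `x`. -/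
noncomputable def enoOffsetR (x V : ℤ → ℝ) (i : ℤ) : ℕ → ℤ
  | 0 => 0
  | 1 => 0
  | j + 2 =>
    let r := enoOffsetR x V i (j + 1)
    if |dd x V (j + 2) (i + r - 1)| < |dd x V (j + 2) (i + r)| then r - 1 else r

open Polynomial Finset



lemma deg_linear_mul_lt {P : ℝ[X]} {c : ℝ} {n : ℕ} (h : P.degree < (n:ℕ)) :
    ((X - C c) * P).degree < ((n+1 : ℕ) : WithBot ℕ) := by
  rcases eq_or_ne P 0 with rfl | h0
  · rw [mul_zero, degree_zero]
    exact WithBot.bot_lt_coe _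
  · rw [degree_mul, degree_X_sub_C, degree_eq_natDegree h0] at *
    have h' : P.natDegree < n := by exact_mod_cast h
    have h2 : 1 + P.natDegree < n + 1 := by omega
    exact_mod_cast h2

variable (x V : ℤ → ℝ)

noncomputable def NP (x V : ℤ → ℝ) (m : ℤ) (j : ℕ) : ℝ[X] :=
  Lagrange.interpolate (Finset.Icc m (m + j)) x V

lemma injOn_x (hx : StrictMono x) (s : Set ℤ) : Set.InjOn x s :=
  fun _ _ _ _ h => hx.injective h

lemma card_Icc_int (m : ℤ) (j : ℕ) : (Finset.Icc m (m + (j:ℤ))).card = j + 1 := by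
  rw [Int.card_Icc]; omega

lemma degree_NP_lt (hx : StrictMono x) (m : ℤ) (j : ℕ) :
    (NP x V m j).degree < ((j + 1 : ℕ) : WithBot ℕ) := by
  have := Lagrange.degree_interpolate_lt (r := V) (injOn_x x hx _)
    (s := Finset.Icc m (m + (j:ℤ)))
  rwa [card_Icc_int] at this

lemma eval_NP (hx : StrictMono x) {m k : ℤ} {j : ℕ} (h1 : m ≤ k) (h2 : k ≤ m + j) :
    ((Lagrange.interpolate (Finset.Icc m (m + (j:ℤ))) x) V).eval (x k) = V k :=
  Lagrange.eval_interpolate_at_node _ (injOn_x x hx _) (by simp [Finset.mem_Icc, h1, h2])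

lemma neville (hx : StrictMono x) (m : ℤ) (j : ℕ) :
    C (x (m + j + 1) - x m) * NP x V m (j + 1) =
      (X - C (x m)) * NP x V (m + 1) j - (X - C (x (m + j + 1))) * NP x V m j := by
  have hne : x (m + j + 1) - x m ≠ 0 :=
    sub_ne_zero.2 (hx.injective.ne (by omega)).symm
  have key : NP x V m (j + 1) =
      C (x (m + j + 1) - x m)⁻¹ *
        ((X - C (x m)) * NP x V (m + 1) j - (X - C (x (m + j + 1))) * NP x V m j) := by
    unfold NP
    refine (Lagrange.eq_interpolate_of_eval_eq _ (injOn_x x hx _) ?_ ?_).symm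
    · rw [card_Icc_int]
      apply lt_of_le_of_lt (degree_mul_le _ _)
      rw [degree_C (inv_ne_zero hne), zero_add]
      apply lt_of_le_of_lt (degree_sub_le _ _)
      have h1 := deg_linear_mul_lt (c := x m) (degree_NP_lt x V hx (m+1) j)
      have h2 := deg_linear_mul_lt (c := x (m + j + 1)) (degree_NP_lt x V hx m j)
      exact max_lt h1 h2
    · intro k hk
      rw [Finset.mem_Icc] at hk
      push_cast at hk
      rw [eval_mul, eval_C, eval_sub, eval_mul, eval_mul, eval_sub, eval_sub, eval_X,
        eval_C, eval_C]
      rcases eq_or_ne k m with rfl | hkm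
      · rw [eval_NP x V hx (m := k) (k := k) (j := j) le_rfl (by omega)]
        field_simp
        ring
      · rcases eq_or_ne k (m + j + 1) with rfl | hkt
        · rw [eval_NP x V hx (m := m + 1) (k := m + j + 1) (j := j) (by omega)
            (by push_cast; omega)]
          field_simp
          ring
        · rw [eval_NP x V hx (m := m + 1) (k := k) (j := j) (by omega)
            (by push_cast; omega),
            eval_NP x V hx (m := m) (k := k) (j := j) (by omega) (by omega)]
          field_simp
          ring
  rw [key, ← mul_assoc, ← C_mul, mul_inv_cancel₀ hne, C_1, one_mul]

lemma prod_Icc_left (f : ℤ → ℝ[X]) {a b : ℤ} (h : a ≤ b) :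
    ∏ k ∈ Finset.Icc a b, f k = f a * ∏ k ∈ Finset.Icc (a+1) b, f k := by
  rw [show Finset.Icc a b = insert a (Finset.Icc (a+1) b) by
      ext k; simp only [Finset.mem_Icc, Finset.mem_insert]; omega,
    Finset.prod_insert (by simp only [Finset.mem_Icc]; omega)]

lemma prod_Icc_right (f : ℤ → ℝ[X]) {a b : ℤ} (h : a ≤ b) :
    ∏ k ∈ Finset.Icc a b, f k = f b * ∏ k ∈ Finset.Icc a (b-1), f k := by
  rw [show Finset.Icc a b = insert b (Finset.Icc a (b-1)) by
      ext k; simp only [Finset.mem_Icc, Finset.mem_insert]; omega,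
    Finset.prod_insert (by simp only [Finset.mem_Icc]; omega)]

lemma newton (hx : StrictMono x) : ∀ j : ℕ, ∀ m : ℤ,
    (NP x V m (j+1) = NP x V m j
      + C (dd x V (j+1) m) * ∏ k ∈ Finset.Icc m (m+(j:ℤ)), (X - C (x k))) ∧
    (NP x V m (j+1) = NP x V (m+1) j
      + C (dd x V (j+1) m) * ∏ k ∈ Finset.Icc (m+1) (m+(j:ℤ)+1), (X - C (x k))) := by
  intro j
  induction j with
  | zero =>
    intro m
    have hne : x (m + 1) - x m ≠ 0 := sub_ne_zero.2 (hx.injective.ne (by omega)).symm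
    have hdd : dd x V 1 m = (V (m+1) - V m) / (x (m+1) - x m) := by
      show (dd x V 0 (m+1) - dd x V 0 m) / (x (m + (0:ℤ) + 1) - x m) = _
      norm_num [dd]
    have base : NP x V m 1 = C (V m) + C (dd x V 1 m) * (X - C (x m)) := by
      unfold NP
      refine (Lagrange.eq_interpolate_of_eval_eq _ (fun _ _ _ _ h => hx.injective h) ?_ ?_).symm
      · rw [show (Finset.Icc m (m + ((1:ℕ):ℤ))).card = 2 by rw [Int.card_Icc]; omega]
        apply lt_of_le_of_lt (degree_add_le _ _)
        apply max_lt (lt_of_le_of_lt degree_C_le (by norm_num))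
        apply lt_of_le_of_lt (degree_mul_le _ _)
        apply lt_of_le_of_lt (add_le_add degree_C_le (degree_X_sub_C _).le)
        norm_num
      · intro k hk
        simp only [Finset.mem_Icc] at hk
        rcases eq_or_ne k m with rfl | hkm
        · simp
        · have hk2 : k = m + 1 := by push_cast at hk; omega
          subst hk2
          rw [hdd]
          simp only [eval_add, eval_mul, eval_sub, eval_C, eval_X]
          field_simp
          ring
    constructor
    · rw [base]
      congr 1
      · simp [NP, Lagrange.interpolate_singleton]
      · norm_num
    · rw [base]
      have hVm1 : V (m+1) = V m + dd x V 1 m * (x (m+1) - x m) := by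
        rw [hdd]; field_simp; ring
      have : NP x V (m+1) 0 = C (V (m+1)) := by
        simp [NP, Lagrange.interpolate_singleton]
      rw [this, hVm1]
      push_cast
      rw [show Finset.Icc (m+1) (m + (0:ℤ) + 1) = {m+1} by norm_num]
      simp only [Finset.prod_singleton, map_add, map_mul, map_sub]
      ring
  | succ j ih =>
    intro m
    have hT : m + ((j:ℤ) + 1) + 1 = m + (j:ℤ) + 2 := by ring
    have hne : x (m + (j:ℤ) + 2) - x m ≠ 0 :=
      sub_ne_zero.2 (hx.injective.ne (by omega)).symm
    have nev := neville x V hx m (j+1)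
    push_cast at nev
    rw [hT] at nev
    have e1 := (ih (m+1)).1
    have e2 := (ih m).2
    rw [show (m+1) + (j:ℤ) = m + (j:ℤ) + 1 by ring] at e1
    have diff : NP x V (m+1) (j+1) = NP x V m (j+1)
        + C (dd x V (j+1) (m+1) - dd x V (j+1) m)
          * ∏ k ∈ Finset.Icc (m+1) (m+(j:ℤ)+1), (X - C (x k)) := by
      rw [e1, e2, map_sub]; ring
    have hdd : dd x V (j+2) m * (x (m + (j:ℤ) + 2) - x m)
        = dd x V (j+1) (m+1) - dd x V (j+1) m := by
      show (dd x V (j+1) (m+1) - dd x V (j+1) m) / (x (m + ((j+1:ℕ):ℤ) + 1) - x m) * _ = _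
      push_cast
      rw [hT, div_mul_cancel₀ _ hne]
    have hCdd : C (dd x V (j+1) (m+1) - dd x V (j+1) m)
        = C (x (m + (j:ℤ) + 2) - x m) * C (dd x V (j+2) m) := by
      rw [← C_mul, ← hdd]; ring_nf
    constructor
    · apply mul_left_cancel₀ (a := C (x (m + (j:ℤ) + 2) - x m)) (C_ne_zero.mpr hne)
      push_cast
      rw [show m + ((j:ℤ)+1) = m + (j:ℤ) + 1 by ring,
        prod_Icc_left _ (show (m:ℤ) ≤ m + (j:ℤ) + 1 by omega),
        nev, diff, hCdd, map_sub (f := (C : ℝ →+* ℝ[X]))]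
      ring
    · apply mul_left_cancel₀ (a := C (x (m + (j:ℤ) + 2) - x m)) (C_ne_zero.mpr hne)
      push_cast
      rw [show m + ((j:ℤ)+1) + 1 = m + (j:ℤ) + 2 by ring,
        prod_Icc_right _ (show (m:ℤ) + 1 ≤ m + (j:ℤ) + 2 by omega),
        show m + (j:ℤ) + 2 - 1 = m + (j:ℤ) + 1 by ring,
        nev, diff, hCdd, map_sub (f := (C : ℝ →+* ℝ[X]))]
      ring

lemma deriv_prod_eval {s : Finset ℤ} {t : ℤ} (ht : t ∈ s) :
    (Polynomial.derivative (∏ k ∈ s, (X - C (x k)))).eval (x t)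
      = ∏ k ∈ s.erase t, (x t - x k) := by
  rw [← Lagrange.nodal_eq, Lagrange.eval_nodal_derivative_eval_node_eq ht, Lagrange.eval_nodal]

lemma step_eq (hx : StrictMono x) (a t : ℤ) (p : ℕ) (h1 : a + 1 ≤ t) (h2 : t ≤ a + p) :
    (derivative (NP x V (a+1) p)).eval (x t) - (derivative (NP x V a p)).eval (x t)
      = dd x V (p+1) a *
        ((∏ k ∈ (Finset.Icc a (a+(p:ℤ))).erase t, (x t - x k))
          - ∏ k ∈ (Finset.Icc (a+1) (a+(p:ℤ)+1)).erase t, (x t - x k)) := by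
  have A1 := (newton x V hx p a).1
  have A2 := (newton x V hx p a).2
  have h : NP x V (a+1) p = NP x V a p
      + C (dd x V (p+1) a) * ∏ k ∈ Finset.Icc a (a+(p:ℤ)), (X - C (x k))
      - C (dd x V (p+1) a) * ∏ k ∈ Finset.Icc (a+1) (a+(p:ℤ)+1), (X - C (x k)) := by
    linear_combination A1 - A2
  rw [h]
  simp only [derivative_add, derivative_sub, derivative_mul, derivative_C, zero_mul, zero_add,
    eval_add, eval_sub, eval_mul, eval_C]
  rw [deriv_prod_eval x (by simp only [Finset.mem_Icc]; omega),
    deriv_prod_eval x (by simp only [Finset.mem_Icc]; omega)]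
  ring

noncomputable def mysign (n : ℤ) : ℝ := if Even n then 1 else -1

lemma mysign_add_one (n : ℤ) : mysign (n + 1) = - mysign n := by
  unfold mysign
  rcases Int.even_or_odd n with h | h
  · rw [if_pos h, if_neg (by simpa [Int.even_add_one, Int.not_even_iff_odd] using h)]
  · rw [if_pos (Int.even_add_one.2 (by simpa [Int.not_even_iff_odd] using h)),
      if_neg (by simpa [Int.not_even_iff_odd] using h)]
    norm_num
lemma mysign_sq (n : ℤ) : mysign n * mysign n = 1 := by
  unfold mysign; split <;> norm_num

lemma mysign_zero : mysign 0 = 1 := by simp [mysign]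

lemma abs_mysign (n : ℤ) : |mysign n| = 1 := by
  unfold mysign; split <;> norm_num

lemma mysign_mul_eq_abs {n : ℤ} {d : ℝ} (h : 0 ≤ mysign n * d) : mysign n * d = |d| := by
  rw [← abs_of_nonneg h, abs_mul, abs_mysign, one_mul]

lemma mysign_mul_eq_neg_abs {n : ℤ} {d : ℝ} (h : mysign n * d ≤ 0) : mysign n * d = -|d| := by
  rw [← neg_neg (mysign n * d), ← abs_of_nonneg (neg_nonneg.2 h), abs_neg, abs_mul,
    abs_mysign, one_mul]

lemma mysign_mul_le_abs (n : ℤ) (d : ℝ) : mysign n * d ≤ |d| := by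
  have := abs_mul (mysign n) d
  rw [abs_mysign, one_mul] at this
  exact this ▸ le_abs_self _

lemma neg_abs_le_mysign_mul (n : ℤ) (d : ℝ) : -|d| ≤ mysign n * d := by
  have := abs_mul (mysign n) d
  rw [abs_mysign, one_mul] at this
  exact this ▸ neg_abs_le _

section gsign
variable (p : ℕ) (t : ℤ)

noncomputable def gp (x : ℤ → ℝ) (p : ℕ) (t a : ℤ) : ℝ :=
  ∏ k ∈ (Finset.Icc a (a + (p:ℤ))).erase t, (x t - x k)

lemma gp_rel (a : ℤ) (h1 : a + 1 ≤ t) (h2 : t ≤ a + p) :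
    (x t - x a) * gp x p t (a+1) = (x t - x (a + (p:ℤ) + 1)) * gp x p t a := by
  unfold gp
  have e1 : (Finset.Icc a (a+(p:ℤ)+1)).erase t
      = insert a ((Finset.Icc (a+1) (a+(p:ℤ)+1)).erase t) := by
    ext k
    simp only [Finset.mem_erase, Finset.mem_Icc, Finset.mem_insert]
    omega
  have e2 : (Finset.Icc a (a+(p:ℤ)+1)).erase t
      = insert (a+(p:ℤ)+1) ((Finset.Icc a (a+(p:ℤ))).erase t) := by
    ext k
    simp only [Finset.mem_erase, Finset.mem_Icc, Finset.mem_insert]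
    omega
  rw [show (a + 1 + (p:ℤ)) = a + (p:ℤ) + 1 by ring]
  calc (x t - x a) * ∏ k ∈ (Finset.Icc (a+1) (a+(p:ℤ)+1)).erase t, (x t - x k)
      = ∏ k ∈ (Finset.Icc a (a+(p:ℤ)+1)).erase t, (x t - x k) := by
        rw [e1, Finset.prod_insert (by
          simp only [Finset.mem_erase, Finset.mem_Icc]; omega)]
    _ = (x t - x (a+(p:ℤ)+1)) * ∏ k ∈ (Finset.Icc a (a+(p:ℤ))).erase t, (x t - x k) := by
        rw [e2, Finset.prod_insert (by
          simp only [Finset.mem_erase, Finset.mem_Icc]; omega)]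

lemma gp_pos (hx : StrictMono x) :
    ∀ a : ℤ, t - p ≤ a → a ≤ t → 0 < mysign (a + p - t) * gp x p t a := by
  have base : 0 < mysign (t - (p:ℤ) + p - t) * gp x p t (t - p) := by
    rw [show t - (p:ℤ) + p - t = 0 by ring, mysign_zero, one_mul]
    apply Finset.prod_pos
    intro k hk
    simp only [Finset.mem_erase, Finset.mem_Icc] at hk
    have : k < t := by omega
    have := hx this
    linarith
  have main : ∀ a : ℤ, t - (p:ℤ) ≤ a → (a ≤ t → 0 < mysign (a + p - t) * gp x p t a) := by
    refine Int.le_induction (fun _ => base) ?_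
    intro a ha ih hat
    have ih' := ih (by omega)
    have h1 : a + 1 ≤ t := hat
    have h2 : t ≤ a + p := by omega
    have key := gp_rel x p t a h1 h2
    have hu : 0 < x t - x a := sub_pos.2 (hx (by omega))
    have hw : x t - x (a + (p:ℤ) + 1) < 0 := sub_neg.2 (hx (by omega))
    have hg : gp x p t (a+1) = (x t - x (a + (p:ℤ) + 1)) * gp x p t a / (x t - x a) := by
      field_simp
      linarith [key]
    rw [show a + 1 + (p:ℤ) - t = (a + p - t) + 1 by ring, mysign_add_one, hg]
    rw [neg_mul, div_eq_mul_inv]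
    have : 0 < (-(x t - x (a + (p:ℤ) + 1))) * (mysign (a + p - t) * gp x p t a) * (x t - x a)⁻¹ := by
      apply mul_pos (mul_pos (by linarith) ih') (inv_pos.2 hu)
    nlinarith [this]

  exact fun a ha hat => main a ha hat
end gsign

lemma eno_rec (m : ℤ) (j : ℕ) (hj : 1 ≤ j) :
    enoOffsetR x V m (j+1) =
      if |dd x V (j+1) (m + enoOffsetR x V m j - 1)| < |dd x V (j+1) (m + enoOffsetR x V m j)|
      then enoOffsetR x V m j - 1 else enoOffsetR x V m j := by
  obtain ⟨n, rfl⟩ : ∃ n, j = n + 1 := ⟨j - 1, by omega⟩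
  rfl

lemma eno_one (m : ℤ) : enoOffsetR x V m 1 = 0 := rfl

lemma eno_bounds (m : ℤ) : ∀ j : ℕ, 1 ≤ j →
    1 - (j:ℤ) ≤ enoOffsetR x V m j ∧ enoOffsetR x V m j ≤ 0 := by
  intro j
  induction j with
  | zero => omega
  | succ n ih =>
    intro _
    rcases Nat.eq_zero_or_pos n with rfl | hn
    · rw [eno_one]; norm_num
    · have h := ih (by omega)
      rw [eno_rec x V m n (by omega)]
      split_ifs <;> push_cast <;> omega

lemma eno_coincide (i : ℤ) (j : ℕ) (hj : 1 ≤ j)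
    (hAB : i + enoOffsetR x V i j = i + 1 + enoOffsetR x V (i+1) j) :
    i + enoOffsetR x V i (j+1) = i + 1 + enoOffsetR x V (i+1) (j+1) := by
  rw [eno_rec x V i j hj, eno_rec x V (i+1) j hj]
  rw [show i + 1 + enoOffsetR x V (i+1) j - 1 = i + enoOffsetR x V i j - 1 by omega,
    show i + 1 + enoOffsetR x V (i+1) j = i + enoOffsetR x V i j by omega]
  split_ifs <;> omega

lemma dd_succ (j : ℕ) (a : ℤ) :
    dd x V (j+1) a = (dd x V j (a+1) - dd x V j a) / (x (a + (j:ℤ) + 1) - x a) := rfl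

lemma eno_inv (hx : StrictMono x) (i : ℤ) (h0 : 0 ≤ dd x V 2 i) :
    ∀ j : ℕ, 1 ≤ j →
      (i + enoOffsetR x V i j = i + 1 + enoOffsetR x V (i+1) j) ∨
      ((∀ a, i + enoOffsetR x V i j ≤ a → a ≤ i + enoOffsetR x V (i+1) j →
          0 ≤ mysign (a + j - i - 1) * dd x V (j+1) a) ∧
       (∀ a, i + 1 + enoOffsetR x V (i+1) j ≤ a → a ≤ i + enoOffsetR x V i j - 1 →
          mysign (a + j - i - 1) * dd x V (j+1) a ≤ 0)) := by
  intro j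
  induction j with
  | zero => omega
  | succ n ih =>
    intro _
    rcases Nat.eq_zero_or_pos n with rfl | hn
    · right
      rw [eno_one, eno_one]
      constructor
      · intro a ha1 ha2
        have ha : a = i := by omega
        have he : a + ((0 + 1 : ℕ) : ℤ) - i - 1 = 0 := by push_cast; omega
        rw [he, mysign_zero, one_mul, ha]
        exact h0
      · intro a ha1 ha2
        omega
    · have hn1 : 1 ≤ n := hn
      rcases ih hn1 with hco | ⟨Hf, Hb⟩
      · left; exact eno_coincide x V i n hn1 hco
      · set rA := enoOffsetR x V i n with hrA
        set rB := enoOffsetR x V (i+1) n with hrB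
        set rA' := enoOffsetR x V i (n+1) with hrA'
        set rB' := enoOffsetR x V (i+1) (n+1) with hrB'
        have recA := eno_rec x V i n hn1
        have recB := eno_rec x V (i+1) n hn1
        rw [← hrA, ← hrA'] at recA
        rw [← hrB, ← hrB'] at recB
        -- trichotomy on stencil positions
        rcases lt_trichotomy (i + rA) (i + 1 + rB) with hAB | hAB | hAB
        · -- forward case
          right
          have hsplit : ∀ a : ℤ,
              mysign (a + ((n:ℤ)+1) - i - 1) * dd x V (n+2) a
                = (mysign (a + n - i - 1) * dd x V (n+1) a
                    + mysign (a + 1 + n - i - 1) * dd x V (n+1) (a+1))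
                  / (x (a + (n:ℤ) + 2) - x a) := by
            intro a
            rw [dd_succ x V (n+1) a]
            rw [show a + ((n+1:ℕ):ℤ) + 1 = a + (n:ℤ) + 2 by push_cast; ring]
            rw [show a + ((n:ℤ)+1) - i - 1 = (a + n - i - 1) + 1 by ring,
              show a + 1 + (n:ℤ) - i - 1 = (a + n - i - 1) + 1 by ring,
              mysign_add_one]
            ring
          have hden : ∀ a : ℤ, 0 < x (a + (n:ℤ) + 2) - x a :=
            fun a => sub_pos.2 (hx (by omega))
          constructor
          · intro a ha1 ha2
            push_cast
            rw [hsplit a]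
            apply div_nonneg _ (le_of_lt (hden a))
            by_cases c1 : i + rA ≤ a
            · by_cases c2 : a + 1 ≤ i + rB
              · have t1 := Hf a c1 (by omega)
                have t2 := Hf (a+1) (by omega) c2
                linarith
              · -- a + 1 = i + 1 + rB and rB' = rB, comparison failed
                have ha1B : a + 1 = i + 1 + rB := by
                  rcases (by split_ifs at recB <;> omega :
                    rB' = rB - 1 ∨ rB' = rB) with h | h <;> omega
                have hB'B : rB' = rB := by omega
                have cB : ¬ |dd x V (n+1) (i + 1 + rB - 1)| < |dd x V (n+1) (i + 1 + rB)| := by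
                  intro hc
                  rw [if_pos hc] at recB
                  omega
                push_neg at cB
                have t1 := Hf a c1 (by omega)
                rw [show a + (n:ℤ) - i - 1 = a + n - i - 1 by ring] at t1
                have e1 : mysign (a + n - i - 1) * dd x V (n+1) a = |dd x V (n+1) a| :=
                  mysign_mul_eq_abs t1
                have e2 : -|dd x V (n+1) (a+1)| ≤ mysign (a + 1 + n - i - 1) * dd x V (n+1) (a+1) :=
                  neg_abs_le_mysign_mul _ _
                have : |dd x V (n+1) (a+1)| ≤ |dd x V (n+1) a| := by
                  rw [ha1B, show a = i + 1 + rB - 1 by omega]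
                  exact cB
                linarith
            · -- a = i + rA - 1, comparison succeeded
              have haA : a = i + rA - 1 := by
                rcases (by split_ifs at recA <;> omega :
                  rA' = rA - 1 ∨ rA' = rA) with h | h <;> omega
              have hA'A : rA' = rA - 1 := by omega
              have cA : |dd x V (n+1) (i + rA - 1)| < |dd x V (n+1) (i + rA)| := by
                by_contra hc
                rw [if_neg hc] at recA
                omega
              have t2 := Hf (a+1) (by omega) (by omega)
              rw [show a + 1 + (n:ℤ) - i - 1 = a + 1 + n - i - 1 by ring] at t2
              have e2 : mysign (a + 1 + n - i - 1) * dd x V (n+1) (a+1) = |dd x V (n+1) (a+1)| :=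
                mysign_mul_eq_abs t2
              have e1 : -|dd x V (n+1) a| ≤ mysign (a + n - i - 1) * dd x V (n+1) a :=
                neg_abs_le_mysign_mul _ _
              have : |dd x V (n+1) a| < |dd x V (n+1) (a+1)| := by
                rw [haA, show i + rA - 1 + 1 = i + rA by ring]
                exact cA
              linarith
          · intro a ha1 ha2
            exfalso
            have b1 : rB - 1 ≤ rB' := by
              rcases (by split_ifs at recB <;> omega : rB' = rB - 1 ∨ rB' = rB) with h | h <;> omega
            have b2 : rA' ≤ rA := by
              rcases (by split_ifs at recA <;> omega : rA' = rA - 1 ∨ rA' = rA) with h | h <;> omega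
            omega
        · left; exact eno_coincide x V i n hn1 hAB
        · -- backward case
          right
          have hsplit : ∀ a : ℤ,
              mysign (a + ((n:ℤ)+1) - i - 1) * dd x V (n+2) a
                = (mysign (a + n - i - 1) * dd x V (n+1) a
                    + mysign (a + 1 + n - i - 1) * dd x V (n+1) (a+1))
                  / (x (a + (n:ℤ) + 2) - x a) := by
            intro a
            rw [dd_succ x V (n+1) a]
            rw [show a + ((n+1:ℕ):ℤ) + 1 = a + (n:ℤ) + 2 by push_cast; ring]
            rw [show a + ((n:ℤ)+1) - i - 1 = (a + n - i - 1) + 1 by ring,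
              show a + 1 + (n:ℤ) - i - 1 = (a + n - i - 1) + 1 by ring,
              mysign_add_one]
            ring
          have hden : ∀ a : ℤ, 0 < x (a + (n:ℤ) + 2) - x a :=
            fun a => sub_pos.2 (hx (by omega))
          constructor
          · intro a ha1 ha2
            exfalso
            have b1 : rA - 1 ≤ rA' := by
              rcases (by split_ifs at recA <;> omega : rA' = rA - 1 ∨ rA' = rA) with h | h <;> omega
            have b2 : rB' ≤ rB := by
              rcases (by split_ifs at recB <;> omega : rB' = rB - 1 ∨ rB' = rB) with h | h <;> omega
            omega
          · intro a ha1 ha2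
            push_cast
            rw [hsplit a]
            apply div_nonpos_of_nonpos_of_nonneg _ (le_of_lt (hden a))
            by_cases c1 : i + 1 + rB ≤ a
            · by_cases c2 : a + 1 ≤ i + rA - 1
              · have t1 := Hb a c1 (by omega)
                have t2 := Hb (a+1) (by omega) c2
                linarith
              · -- a + 1 = i + rA, rA' = rA, comparison failed
                have ha1A : a + 1 = i + rA := by
                  rcases (by split_ifs at recA <;> omega :
                    rA' = rA - 1 ∨ rA' = rA) with h | h <;> omega
                have cA : ¬ |dd x V (n+1) (i + rA - 1)| < |dd x V (n+1) (i + rA)| := by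
                  intro hc
                  rw [if_pos hc] at recA
                  omega
                push_neg at cA
                have t1 := Hb a c1 (by omega)
                rw [show a + (n:ℤ) - i - 1 = a + n - i - 1 by ring] at t1
                have e1 : mysign (a + n - i - 1) * dd x V (n+1) a = -|dd x V (n+1) a| :=
                  mysign_mul_eq_neg_abs t1
                have e2 : mysign (a + 1 + n - i - 1) * dd x V (n+1) (a+1) ≤ |dd x V (n+1) (a+1)| :=
                  mysign_mul_le_abs _ _
                have : |dd x V (n+1) (a+1)| ≤ |dd x V (n+1) a| := by
                  rw [ha1A, show a = i + rA - 1 by omega]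
                  exact cA
                linarith
            · -- a = i + 1 + rB - 1, comparison succeeded
              have haB : a = i + 1 + rB - 1 := by
                rcases (by split_ifs at recB <;> omega :
                  rB' = rB - 1 ∨ rB' = rB) with h | h <;> omega
              have cB : |dd x V (n+1) (i + 1 + rB - 1)| < |dd x V (n+1) (i + 1 + rB)| := by
                by_contra hc
                rw [if_neg hc] at recB
                omega
              have t2 := Hb (a+1) (by omega) (by omega)
              rw [show a + 1 + (n:ℤ) - i - 1 = a + 1 + n - i - 1 by ring] at t2
              have e2 : mysign (a + 1 + n - i - 1) * dd x V (n+1) (a+1) = -|dd x V (n+1) (a+1)| :=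
                mysign_mul_eq_neg_abs t2
              have e1 : mysign (a + n - i - 1) * dd x V (n+1) a ≤ |dd x V (n+1) a| :=
                mysign_mul_le_abs _ _
              have : |dd x V (n+1) a| < |dd x V (n+1) (a+1)| := by
                rw [haB, show i + 1 + rB - 1 + 1 = i + 1 + rB by ring]
                exact cB
              linarith

lemma tele (p : ℕ) (i A0 : ℤ) (N : ℕ) :
    (derivative (NP x V (A0 + N) p)).eval (x (i+1))
      - (derivative (NP x V A0 p)).eval (x (i+1))
    = ∑ n ∈ Finset.range N,
        ((derivative (NP x V (A0 + n + 1) p)).eval (x (i+1))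
          - (derivative (NP x V (A0 + n) p)).eval (x (i+1))) := by
  have h := Finset.sum_range_sub
    (f := fun n : ℕ => (derivative (NP x V (A0 + n) p)).eval (x (i+1))) N
  rw [show A0 + ((0:ℕ):ℤ) = A0 by push_cast; ring] at h
  rw [← h]
  apply Finset.sum_congr rfl
  intro n _
  have : A0 + ((n+1 : ℕ) : ℤ) = A0 + n + 1 := by push_cast; ring
  rw [this]

lemma eno_core (p : ℕ) (hp : 1 ≤ p) (hx : StrictMono x) (i : ℤ)
    (h0 : 0 ≤ dd x V 2 i) :
    0 ≤ (derivative (NP x V (i + 1 + enoOffsetR x V (i+1) p) p)).eval (x (i+1))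
        - (derivative (NP x V (i + enoOffsetR x V i p) p)).eval (x (i+1)) := by
  obtain ⟨hA1, hA2⟩ := eno_bounds x V i p hp
  obtain ⟨hB1, hB2⟩ := eno_bounds x V (i+1) p hp
  set rA := enoOffsetR x V i p with hrA
  set rB := enoOffsetR x V (i+1) p with hrB
  set A := i + rA with hA
  set B := i + 1 + rB with hB
  -- the per-step formula
  have hstep : ∀ a : ℤ, i + 1 - p ≤ a → a ≤ i →
      (derivative (NP x V (a+1) p)).eval (x (i+1))
        - (derivative (NP x V a p)).eval (x (i+1))
      = dd x V (p+1) a * (gp x p (i+1) a - gp x p (i+1) (a+1)) := by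
    intro a h1 h2
    have h := step_eq x V hx a (i+1) p (by omega) (by omega)
    rw [show a + (p:ℤ) + 1 = a + 1 + (p:ℤ) by ring] at h
    simpa [gp] using h
  -- bracket sign
  have hbr : ∀ a : ℤ, i + 1 - p ≤ a → a ≤ i →
      0 < mysign (a + p - i - 1) * (gp x p (i+1) a - gp x p (i+1) (a+1)) := by
    intro a h1 h2
    have hga := gp_pos x p (i+1) hx a (by omega) (by omega)
    have hga1 := gp_pos x p (i+1) hx (a+1) (by omega) (by omega)
    rw [show a + (p:ℤ) - (i+1) = a + p - i - 1 by ring] at hga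
    rw [show a + 1 + (p:ℤ) - (i+1) = (a + p - i - 1) + 1 by ring, mysign_add_one] at hga1
    rw [mul_sub]
    linarith
  -- step sign rewritten with mysign squared
  have hkey : ∀ a : ℤ, i + 1 - p ≤ a → a ≤ i →
      (derivative (NP x V (a+1) p)).eval (x (i+1))
        - (derivative (NP x V a p)).eval (x (i+1))
      = (mysign (a + p - i - 1) * dd x V (p+1) a)
        * (mysign (a + p - i - 1) * (gp x p (i+1) a - gp x p (i+1) (a+1))) := by
    intro a h1 h2
    rw [hstep a h1 h2,
      show (mysign (a + p - i - 1) * dd x V (p+1) a)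
          * (mysign (a + p - i - 1) * (gp x p (i+1) a - gp x p (i+1) (a+1)))
        = (mysign (a + p - i - 1) * mysign (a + p - i - 1))
          * (dd x V (p+1) a * (gp x p (i+1) a - gp x p (i+1) (a+1))) by ring,
      mysign_sq, one_mul]
  rcases eno_inv x V hx i h0 p hp with hco | ⟨Hf, Hb⟩
  · rw [← hA, ← hB] at hco
    rw [show B = A from hco.symm]
    simp
  · rcases le_or_gt A B with hAB | hAB
    · have hBA : B = A + ((B - A).toNat : ℤ) := by omega
      rw [hBA, tele x V p i A ((B - A).toNat)]
      apply Finset.sum_nonneg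
      intro n hn
      rw [Finset.mem_range] at hn
      have hrange1 : i + 1 - p ≤ A + n := by omega
      have hrange2 : A + n ≤ i := by omega
      rw [hkey (A + n) hrange1 hrange2]
      apply mul_nonneg
      · exact Hf (A + n) (by omega) (by omega)
      · exact (hbr (A + n) hrange1 hrange2).le
    · have hAB' : A = B + ((A - B).toNat : ℤ) := by omega
      have : (derivative (NP x V A p)).eval (x (i+1))
          - (derivative (NP x V B p)).eval (x (i+1)) ≤ 0 := by
        rw [hAB', tele x V p i B ((A - B).toNat)]
        apply Finset.sum_nonpos
        intro n hn
        rw [Finset.mem_range] at hn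
        have hrange1 : i + 1 - p ≤ B + n := by omega
        have hrange2 : B + n ≤ i := by omega
        rw [hkey (B + n) hrange1 hrange2]
        apply mul_nonpos_of_nonpos_of_nonneg
        · exact Hb (B + n) (by omega) (by omega)
        · exact (hbr (B + n) hrange1 hrange2).le
      linarith

lemma dd_one (hx : StrictMono x) (vbar : ℤ → ℝ)
    (hV : ∀ j, V (j + 1) - V j = (x (j + 1) - x j) * vbar j) (m : ℤ) :
    dd x V 1 m = vbar m := by
  have h : dd x V 1 m = (V (m+1) - V m) / (x (m + (0:ℤ) + 1) - x m) := rfl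
  rw [h, show m + (0:ℤ) + 1 = m + 1 by ring, hV m,
    mul_div_cancel_left₀ _ (sub_ne_zero.2 (hx.injective.ne (by omega)).symm)]

lemma dd_two (hx : StrictMono x) (vbar : ℤ → ℝ)
    (hV : ∀ j, V (j + 1) - V j = (x (j + 1) - x j) * vbar j) (i : ℤ) :
    dd x V 2 i = (vbar (i+1) - vbar i) / (x (i + (1:ℤ) + 1) - x i) := by
  have h : dd x V 2 i = (dd x V 1 (i+1) - dd x V 1 i) / (x (i + (1:ℤ) + 1) - x i) := rfl
  rw [h, dd_one x V hx vbar hV, dd_one x V hx vbar hV]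

lemma dd_neg : ∀ (j : ℕ) (a : ℤ), dd x (-V) j a = - dd x V j a
  | 0, a => rfl
  | (j+1), a => by
    show (dd x (-V) j (a+1) - dd x (-V) j a) / _ = -((dd x V j (a+1) - dd x V j a) / _)
    rw [dd_neg j (a+1), dd_neg j a]
    ring

lemma eno_neg (m : ℤ) : ∀ j : ℕ, enoOffsetR x (-V) m j = enoOffsetR x V m j
  | 0 => rfl
  | 1 => rfl
  | (j+2) => by
    show (if |dd x (-V) (j+2) (m + enoOffsetR x (-V) m (j+1) - 1)| <
            |dd x (-V) (j+2) (m + enoOffsetR x (-V) m (j+1))|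
          then enoOffsetR x (-V) m (j+1) - 1 else enoOffsetR x (-V) m (j+1)) = _
    rw [eno_neg m (j+1), dd_neg, dd_neg, abs_neg, abs_neg]
    rfl

lemma NP_neg (m : ℤ) (j : ℕ) : NP x (-V) m j = - NP x V m j :=
  map_neg (Lagrange.interpolate (Finset.Icc m (m + (j:ℤ))) x) V


/-- the sign property of `p`-th order ENO reconstruction.
Interfaces are `x_j` (cell `I_i = [x_i, x_{i+1}]`), `vbar` are the cell averages,
and `V` is (a choice of) the primitive, i.e. `V_{j+1} - V_j = |I_j| vbar_j`.
The reconstructed value in cell `i` at an interface is the derivative of the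
interpolant of `V` on the ENO-selected stencil of `p+1` interface points. -/
theorem eno_reconstruction_sign_property (p : ℕ) (hp : 1 ≤ p) (x vbar V : ℤ → ℝ)
    (hx : StrictMono x)
    (hV : ∀ j, V (j + 1) - V j = (x (j + 1) - x j) * vbar j) (i : ℤ) :
    (vbar (i + 1) - vbar i ≥ 0 →
      (Polynomial.derivative (Lagrange.interpolate
          (Finset.Icc (i + 1 + enoOffsetR x V (i + 1) p)
            (i + 1 + enoOffsetR x V (i + 1) p + p)) x V)).eval (x (i + 1)) -
      (Polynomial.derivative (Lagrange.interpolate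
          (Finset.Icc (i + enoOffsetR x V i p)
            (i + enoOffsetR x V i p + p)) x V)).eval (x (i + 1)) ≥ 0) ∧
    (vbar (i + 1) - vbar i ≤ 0 →
      (Polynomial.derivative (Lagrange.interpolate
          (Finset.Icc (i + 1 + enoOffsetR x V (i + 1) p)
            (i + 1 + enoOffsetR x V (i + 1) p + p)) x V)).eval (x (i + 1)) -
      (Polynomial.derivative (Lagrange.interpolate
          (Finset.Icc (i + enoOffsetR x V i p)
            (i + enoOffsetR x V i p + p)) x V)).eval (x (i + 1)) ≤ 0) ∧
    (vbar (i + 1) = vbar i →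
      (Polynomial.derivative (Lagrange.interpolate
          (Finset.Icc (i + 1 + enoOffsetR x V (i + 1) p)
            (i + 1 + enoOffsetR x V (i + 1) p + p)) x V)).eval (x (i + 1)) =
      (Polynomial.derivative (Lagrange.interpolate
          (Finset.Icc (i + enoOffsetR x V i p)
            (i + enoOffsetR x V i p + p)) x V)).eval (x (i + 1))) := by
  have hden : (0:ℝ) < x (i + (1:ℤ) + 1) - x i := sub_pos.2 (hx (by omega))
  have hge : vbar (i + 1) - vbar i ≥ 0 →
      0 ≤ (Polynomial.derivative (NP x V (i + 1 + enoOffsetR x V (i + 1) p) p)).eval (x (i + 1))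
        - (Polynomial.derivative (NP x V (i + enoOffsetR x V i p) p)).eval (x (i + 1)) := by
    intro hΔ
    apply eno_core x V p hp hx i
    rw [dd_two x V hx vbar hV]
    exact div_nonneg (by linarith) hden.le
  have hle : vbar (i + 1) - vbar i ≤ 0 →
      (Polynomial.derivative (NP x V (i + 1 + enoOffsetR x V (i + 1) p) p)).eval (x (i + 1))
        - (Polynomial.derivative (NP x V (i + enoOffsetR x V i p) p)).eval (x (i + 1)) ≤ 0 := by
    intro hΔ
    have h0 : 0 ≤ dd x (-V) 2 i := by
      rw [dd_neg, dd_two x V hx vbar hV]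
      have : (vbar (i+1) - vbar i) / (x (i + (1:ℤ) + 1) - x i) ≤ 0 :=
        div_nonpos_of_nonpos_of_nonneg (by linarith) hden.le
      linarith
    have h := eno_core x (-V) p hp hx i h0
    rw [eno_neg, eno_neg, NP_neg, NP_neg] at h
    simp only [map_neg, eval_neg] at h
    linarith
  refine ⟨?_, ?_, ?_⟩
  · intro hΔ
    have := hge hΔ
    unfold NP at this
    push_cast at this ⊢
    linarith
  · intro hΔ
    have := hle hΔ
    unfold NP at this
    push_cast at this ⊢
    linarith
  · intro hΔ
    have h1 := hge (by rw [hΔ]; simp)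
    have h2 := hle (by rw [hΔ]; simp)
    unfold NP at h1 h2
    push_cast at h1 h2 ⊢
    linarith
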